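/- In every convex bipartite graph, any cycle of length at least 6 has a chord; consequently, every convex bipartite graph is chordal bipartite. -/

import Mathlib

open Finset SimpleGraph

/-- A convex bipartite graph with parts `X = Fin n` (with its natural order giving the
convex ordering) and `Y`: each `y : Y` has a consecutive neighborhood in `Fin n`. -/
structure ConvexBip (n : ℕ) (Y : Type*) where
  adj : Fin n → Y → Prop
  convex : ∀ (y : Y) (i₁ i₂ i₃ : Fin n),
    i₁ ≤ i₂ → i₂ ≤ i₃ → adj i₁ y → adj i₃ y → adj i₂ y

namespace ConvexBip

variable {n : ℕ} {Y : Type*}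

/-- The underlying bipartite simple graph on `Fin n ⊕ Y`. -/
def toGraph (G : ConvexBip n Y) : SimpleGraph (Fin n ⊕ Y) where
  Adj u v := (∃ i y, u = Sum.inl i ∧ v = Sum.inr y ∧ G.adj i y) ∨
             (∃ i y, u = Sum.inr y ∧ v = Sum.inl i ∧ G.adj i y)
  symm := by constructor; rintro u v (⟨i, y, rfl, rfl, h⟩ | ⟨i, y, rfl, rfl, h⟩)
             · exact Or.inr ⟨i, y, rfl, rfl, h⟩
             · exact Or.inl ⟨i, y, rfl, rfl, h⟩
  loopless := by constructor; rintro u (⟨i, y, rfl, h, _⟩ | ⟨i, y, rfl, h, _⟩) <;> simp_all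

/-- `N_G[X_{p..q}]`: the set of `y ∈ Y` whose whole neighborhood lies in `{x_p, …, x_q}`. -/
def NIn (G : ConvexBip n Y) (p q : Fin n) : Set Y :=
  {y | ∀ i, G.adj i y → p ≤ i ∧ i ≤ q}

/-- `N'_G[X_{p..q}]`: the set of `y ∈ Y` having at least two neighbors in `{x_p, …, x_q}`. -/
noncomputable def NIn' (G : ConvexBip n Y) (p q : Fin n) : Set Y :=
  {y | 2 ≤ {i : Fin n | G.adj i y ∧ p ≤ i ∧ i ≤ q}.ncard}

/-- Degree of a vertex `y ∈ Y`. -/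
noncomputable def degY (G : ConvexBip n Y) (y : Y) : ℕ := {i : Fin n | G.adj i y}.ncard

/-- Property A. -/
def PropertyA (G : ConvexBip n Y) : Prop :=
  (∀ p q : Fin n, p < q →
      ((p.val = 0 ∧ q.val < n - 1) ∨ (0 < p.val ∧ q.val = n - 1) ∨
        (0 < p.val ∧ q.val < n - 1)) →
      (G.NIn p q).ncard ≤ q.val - p.val) ∧
  (∀ (k : ℕ) (p q : Fin k → Fin n), 1 ≤ k → k ≤ n - 1 →
      (∀ i, p i < q i) → (∀ i i' : Fin k, i < i' → q i ≤ p i') →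
      (∑ i, ((q i).val - (p i).val)) ≤ (⋃ i, G.NIn' (p i) (q i)).ncard) ∧
  (∀ hn : 0 < n,
      (G.NIn ⟨0, hn⟩ ⟨n - 1, by omega⟩).ncard = n ∧
      (G.NIn' ⟨0, hn⟩ ⟨n - 1, by omega⟩).ncard = n)

/-- Property B. -/
def PropertyB (G : ConvexBip n Y) : Prop :=
  (∀ p q : Fin n, p < q →
      ((p.val = 0 ∧ q.val < n - 1) ∨ (0 < p.val ∧ q.val = n - 1) ∨
        (0 < p.val ∧ q.val < n - 1)) →
      (G.NIn p q).ncard ≤ q.val - p.val + 1) ∧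
  (∀ hn : 0 < n, (G.NIn ⟨0, hn⟩ ⟨n - 1, by omega⟩).ncard ≤ n + 1) ∧
  (∀ (k : ℕ) (p q : Fin k → Fin n), 1 ≤ k → k ≤ n - 1 →
      (∀ i, p i < q i) → (∀ i i' : Fin k, i < i' → q i ≤ p i') →
      (∑ i, ((q i).val - (p i).val)) ≤ (⋃ i, G.NIn' (p i) (q i)).ncard) ∧
  ({y : Y | G.degY y = 1}.ncard ≤ 2 ∧
    (2 ≤ n → ∀ (i : Fin n) (y y' : Y), y ≠ y' → G.degY y = 1 → G.degY y' = 1 →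
      G.adj i y → G.adj i y' → False))

/-- The interval `X_{p..q}` is maximal: `|N_G[X_{p..q}]| = q - p + 1` and no strictly
larger interval (within indices 2..n-1) has the analogous property. -/
def IsMaximalInt (G : ConvexBip n Y) (p q : Fin n) : Prop :=
  (G.NIn p q).ncard = q.val - p.val + 1 ∧
  ¬ ∃ p' q' : Fin n, 0 < p'.val ∧ q'.val < n - 1 ∧ p' ≤ p ∧ q ≤ q' ∧
      (p' < p ∨ q < q') ∧ (G.NIn p' q').ncard = q'.val - p'.val + 1

/-- Monotone convex bipartite graph. -/
def IsMonotone (G : ConvexBip n Y) : Prop :=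
  G.PropertyB ∧
  (¬ ∃ (y : Y) (k : Fin n), G.degY y = 1 ∧ G.adj k y ∧ 0 < k.val ∧ k.val < n - 1) ∧
  (¬ ∃ p q : Fin n, 0 < p.val ∧ p < q ∧ q.val < n - 1 ∧ G.IsMaximalInt p q)

/-- Non-monotone convex bipartite graph (satisfying Property B). -/
def IsNonMonotone (G : ConvexBip n Y) : Prop :=
  G.PropertyB ∧
  ((∃ (y : Y) (k : Fin n), G.degY y = 1 ∧ G.adj k y ∧ 0 < k.val ∧ k.val < n - 1) ∨
   (∃ p q : Fin n, 0 < p.val ∧ p < q ∧ q.val < n - 1 ∧ G.IsMaximalInt p q))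

/-- The interval graph obtained from `G`: keep all edges of `G` and make two distinct
`Y`-vertices adjacent whenever their neighborhoods in `X` intersect. -/
def intervalGraph (G : ConvexBip n Y) : SimpleGraph (Fin n ⊕ Y) where
  Adj u v := G.toGraph.Adj u v ∨
    (∃ y y', u = Sum.inr y ∧ v = Sum.inr y' ∧ y ≠ y' ∧ ∃ i, G.adj i y ∧ G.adj i y')
  symm := by
    constructor
    rintro u v (h | ⟨y, y', rfl, rfl, hne, i, h1, h2⟩)
    · exact Or.inl h.symm
    · exact Or.inr ⟨y', y, rfl, rfl, hne.symm, i, h2, h1⟩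
  loopless := by
    constructor
    rintro u (h | ⟨y, y', rfl, h, hne, _⟩)
    · exact G.toGraph.loopless.irrefl u h
    · exact hne (Sum.inr.inj h)

/-- `G` has a Hamiltonian cycle. -/
def HasHamCycle {V : Type*} [DecidableEq V] (H : SimpleGraph V) : Prop :=
  ∃ (v : V) (c : H.Walk v v), c.IsHamiltonianCycle

/-- `G` has a Hamiltonian path. -/
def HasHamPath {V : Type*} [DecidableEq V] (H : SimpleGraph V) : Prop :=
  ∃ (u v : V) (p : H.Walk u v), p.IsHamiltonian

/-- A maximal clique of a simple graph. -/
def IsMaxClique {V : Type*} (H : SimpleGraph V) (s : Set V) : Prop :=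
  H.IsClique s ∧ ∀ t : Set V, H.IsClique t → s ⊆ t → s = t

end ConvexBip




namespace StmtAux

variable {V : Type*} {H : SimpleGraph V}

lemma getVert_support_getElem {u v : V} (p : H.Walk u v) {i : ℕ}
    (h : i < p.support.length) : p.support[i] = p.getVert i := by
  induction p generalizing i with
  | nil =>
    have : i = 0 := by simp at h; omega
    subst this; simp [Walk.getVert]
  | cons hadj q ih =>
    cases i with
    | zero => simp [Walk.getVert]
    | succ k =>
      simp only [Walk.support_cons, List.getElem_cons_succ, Walk.getVert_cons_succ]
      exact ih (by simpa [Walk.length_support] using (by simpa [Walk.support_cons] using h : k + 1 < q.support.length + 1))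

lemma cycle_getVert_inj {v : V} {c : H.Walk v v} (hc : c.IsCycle)
    {i j : ℕ} (hi : i < c.length) (hj : j < c.length)
    (hij : c.getVert i = c.getVert j) : i = j := by
  have hnd : c.support.tail.Nodup := hc.2
  have htl : c.support.tail.length = c.length := by
    have := c.length_support; simp [List.length_tail, this]
  have key : ∀ a b : ℕ, a < c.length → b < c.length →
      c.getVert (a + 1) = c.getVert (b + 1) → a = b := by
    intro a b ha hb hab
    have ha' : a < c.support.tail.length := by omega
    have hb' : b < c.support.tail.length := by omega
    have e1 : c.support.tail[a] = c.getVert (a + 1) := by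
      rw [List.getElem_tail]; exact getVert_support_getElem c (by simp [Walk.length_support]; omega)
    have e2 : c.support.tail[b] = c.getVert (b + 1) := by
      rw [List.getElem_tail]; exact getVert_support_getElem c (by simp [Walk.length_support]; omega)
    have : c.support.tail[a] = c.support.tail[b] := by rw [e1, e2, hab]
    exact (hnd.getElem_inj_iff).mp this
  have hL : 1 ≤ c.length := by
    have := hc.three_le_length; omega
  rcases Nat.eq_zero_or_pos i with rfl | hipos
  · rcases Nat.eq_zero_or_pos j with rfl | hjpos
    · rfl
    · exfalso
      have h0 : c.getVert 0 = c.getVert c.length := by simp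
      have : c.getVert ((j - 1) + 1) = c.getVert ((c.length - 1) + 1) := by
        have e : (j - 1) + 1 = j := by omega
        have e2 : (c.length - 1) + 1 = c.length := by omega
        rw [e, e2, ← hij, h0]
      have := key _ _ (by omega) (by omega) this
      omega
  · rcases Nat.eq_zero_or_pos j with rfl | hjpos
    · exfalso
      have h0 : c.getVert 0 = c.getVert c.length := by simp
      have : c.getVert ((i - 1) + 1) = c.getVert ((c.length - 1) + 1) := by
        have e : (i - 1) + 1 = i := by omega
        have e2 : (c.length - 1) + 1 = c.length := by omega
        rw [e, e2, hij, h0]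
      have := key _ _ (by omega) (by omega) this
      omega
    · have := key (i - 1) (j - 1) (by omega) (by omega) (by
        have e : (i - 1) + 1 = i := by omega
        have e2 : (j - 1) + 1 = j := by omega
        rw [e, e2]; exact hij)
      omega

lemma edge_endpoints {v : V} {c : H.Walk v v} (hc : c.IsCycle) {t : ℕ}
    (ht : 0 < t) (ht2 : t < c.length) {w : V}
    (hw : s(c.getVert t, w) ∈ c.edges) :
    w = c.getVert (t - 1) ∨ w = c.getVert (t + 1) := by
  rw [← Walk.mem_edges_toSubgraph, Subgraph.mem_edgeSet, Walk.toSubgraph_adj_iff] at hw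
  obtain ⟨i, heq, hi⟩ := hw
  rw [Sym2.eq_iff] at heq
  rcases heq with ⟨h1, h2⟩ | ⟨h1, h2⟩
  · have : i = t := cycle_getVert_inj hc hi ht2 h1
    right; rw [← h2, this]
  · -- getVert i = w, getVert (i+1) = getVert t
    rcases Nat.lt_or_ge (i + 1) c.length with h | h
    · have : i + 1 = t := cycle_getVert_inj hc h ht2 h2
      left; rw [← h1]; congr 1; omega
    · have hiL : i + 1 = c.length := by omega
      exfalso
      have h0 : c.getVert (i + 1) = c.getVert 0 := by rw [hiL]; simp
      have : (0 : ℕ) = t := cycle_getVert_inj hc (by omega) ht2 (h0 ▸ h2)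
      omega

lemma mem_support_tail_iff {v : V} (c : H.Walk v v) (hnil : ¬ c.Nil) (x : V) :
    x ∈ c.support ↔ x ∈ c.support.tail := by
  constructor
  · intro hx
    have hcons := c.support_eq_cons
    rw [hcons, List.mem_cons] at hx
    rcases hx with rfl | hx
    · have hL : 0 < c.length := Walk.not_nil_iff_lt_length.mp hnil
      have hlt : c.length - 1 < c.support.tail.length := by
        simp [List.length_tail, c.length_support]; omega
      have hval : c.support.tail[c.length - 1] = x := by
        rw [List.getElem_tail, getVert_support_getElem c (by simp [c.length_support]; omega)]
        have e : c.length - 1 + 1 = c.length := by omega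
        rw [e]; simp
      have := List.getElem_mem hlt
      rwa [hval] at this
    · exact hx
  · intro hx
    rw [c.support_eq_cons, List.mem_cons]; right; exact hx

end StmtAux


/-- in a convex bipartite graph, every cycle of length at least 6 has a
chord (an edge of the graph between two vertices of the cycle that is not a cycle edge);
hence convex bipartite graphs are chordal bipartite. -/
theorem stmt_13 {n : ℕ} {Y : Type*} [Fintype Y] [DecidableEq Y]
    (G : ConvexBip n Y) (v : Fin n ⊕ Y) (c : G.toGraph.Walk v v)
    (hc : c.IsCycle) (hlen : 6 ≤ c.length) :
    ∃ u w : Fin n ⊕ Y, G.toGraph.Adj u w ∧ u ∈ c.support ∧ w ∈ c.support ∧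
      s(u, w) ∉ c.edges := by
  classical
  haveI : DecidablePred (fun x : Fin n => Sum.inl x ∈ c.support) := Classical.decPred _
  have hlen0 : 0 < c.length := by omega
  have hadj0 := c.adj_getVert_succ hlen0
  have hinl : ∃ x : Fin n, Sum.inl x ∈ c.support := by
    rcases hadj0 with ⟨i, y, h1, h2, h⟩ | ⟨i, y, h1, h2, h⟩
    · exact ⟨i, by rw [← h1]; exact Walk.mem_support_iff_exists_getVert.mpr ⟨0, rfl, by omega⟩⟩
    · exact ⟨i, by rw [← h2]; exact Walk.mem_support_iff_exists_getVert.mpr ⟨1, rfl, by omega⟩⟩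
  set T : Finset (Fin n) := Finset.univ.filter (fun x => Sum.inl x ∈ c.support) with hT
  have hTne : T.Nonempty := ⟨hinl.choose, by simp [hT, hinl.choose_spec]⟩
  set x₀ := T.max' hTne with hx₀
  have hmem : Sum.inl x₀ ∈ c.support := by have := T.max'_mem hTne; simpa [hT] using this
  have hmax : ∀ x : Fin n, Sum.inl x ∈ c.support → x ≤ x₀ := fun x hx =>
    T.le_max' x (by simp [hT, hx])
  set c' := c.rotate _ hmem with hc'def
  have hc' : c'.IsCycle := hc.rotate hmem
  have hlen' : c'.length = c.length := by
    rw [← Walk.length_edges, ← Walk.length_edges]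
    exact (c.rotate_edges _ hmem).perm.length_eq
  have hL6 : 6 ≤ c'.length := by omega
  set L := c'.length with hLdef
  have hnil : ¬ c.Nil := hc.not_nil
  have hnil' : ¬ c'.Nil := hc'.not_nil
  have hsupp : ∀ x, x ∈ c'.support ↔ x ∈ c.support := by
    intro x
    rw [StmtAux.mem_support_tail_iff c' hnil', StmtAux.mem_support_tail_iff c hnil]
    exact (c.support_rotate _ hmem).mem_iff
  have hedges : ∀ e, e ∈ c'.edges ↔ e ∈ c.edges := fun e => (c.rotate_edges _ hmem).mem_iff
  have hgv : ∀ i, i ≤ L → c'.getVert i ∈ c.support := fun i hi =>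
    (hsupp _).mp (Walk.mem_support_iff_exists_getVert.mpr ⟨i, rfl, hi⟩)
  have h0 : c'.getVert 0 = Sum.inl x₀ := c'.getVert_zero
  have hLL : c'.getVert L = Sum.inl x₀ := c'.getVert_length
  have a01 := c'.adj_getVert_succ (show 0 < L by omega)
  have a12 := c'.adj_getVert_succ (show 1 < L by omega)
  have aL2 := c'.adj_getVert_succ (show L - 2 < L by omega)
  have aL1 := c'.adj_getVert_succ (show L - 1 < L by omega)
  rw [h0] at a01
  rw [show (0:ℕ) + 1 = 1 from rfl] at a01
  rw [show (1:ℕ) + 1 = 2 from rfl] at a12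
  rw [show L - 2 + 1 = L - 1 by omega] at aL2
  rw [show L - 1 + 1 = L by omega, hLL] at aL1
  obtain ⟨z1, hy1, hz1⟩ : ∃ z1, c'.getVert 1 = Sum.inr z1 ∧ G.adj x₀ z1 := by
    rcases a01 with ⟨i, y, h1, h2, h⟩ | ⟨i, y, h1, h2, h⟩
    · obtain rfl := Sum.inl.inj h1
      exact ⟨y, h2, h⟩
    · simp at h1
  rw [hy1] at a12
  obtain ⟨xa, ha2, hza⟩ : ∃ xa, c'.getVert 2 = Sum.inl xa ∧ G.adj xa z1 := by
    rcases a12 with ⟨i, y, h1, h2, h⟩ | ⟨i, y, h1, h2, h⟩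
    · simp at h1
    · obtain rfl := Sum.inr.inj h1
      exact ⟨i, h2, h⟩
  obtain ⟨z2, hy2, hz2⟩ : ∃ z2, c'.getVert (L - 1) = Sum.inr z2 ∧ G.adj x₀ z2 := by
    rcases aL1 with ⟨i, y, h1, h2, h⟩ | ⟨i, y, h1, h2, h⟩
    · simp at h2
    · obtain rfl := Sum.inl.inj h2
      exact ⟨y, h1, h⟩
  rw [hy2] at aL2
  obtain ⟨xb, hb, hzb⟩ : ∃ xb, c'.getVert (L - 2) = Sum.inl xb ∧ G.adj xb z2 := by
    rcases aL2 with ⟨i, y, h1, h2, h⟩ | ⟨i, y, h1, h2, h⟩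
    · obtain rfl := Sum.inr.inj h2
      exact ⟨i, h1, h⟩
    · simp at h2
  have hxa_ne : xa ≠ x₀ := by
    intro h
    have := StmtAux.cycle_getVert_inj hc' (show 2 < L by omega) (show 0 < L by omega)
      (by rw [ha2, h, h0])
    omega
  have hxb_ne : xb ≠ x₀ := by
    intro h
    have := StmtAux.cycle_getVert_inj hc' (show L - 2 < L by omega) (show 0 < L by omega)
      (by rw [hb, h, h0])
    omega
  have hab : xa ≠ xb := by
    intro h
    have := StmtAux.cycle_getVert_inj hc' (show 2 < L by omega) (show L - 2 < L by omega)
      (by rw [ha2, h, hb])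
    omega
  have hxa_le : xa ≤ x₀ := hmax xa (by rw [← ha2]; exact hgv 2 (by omega))
  have hxb_le : xb ≤ x₀ := hmax xb (by rw [← hb]; exact hgv (L - 2) (by omega))
  rcases le_total xa xb with hle | hle
  · have hadjb : G.adj xb z1 := G.convex z1 xa xb x₀ hle hxb_le hza hz1
    refine ⟨Sum.inr z1, Sum.inl xb, Or.inr ⟨xb, z1, rfl, rfl, hadjb⟩, ?_, ?_, ?_⟩
    · rw [← hy1]; exact hgv 1 (by omega)
    · rw [← hb]; exact hgv (L - 2) (by omega)
    · intro hEdge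
      rw [← hedges, ← hy1] at hEdge
      have hcase := StmtAux.edge_endpoints hc' (show (0:ℕ) < 1 by omega)
        (show 1 < L by omega) hEdge
      rw [show (1:ℕ) - 1 = 0 from rfl, show (1:ℕ) + 1 = 2 from rfl, h0, ha2] at hcase
      rcases hcase with h | h
      · exact hxb_ne (Sum.inl.inj h)
      · exact hab (Sum.inl.inj h).symm
  · have hadja : G.adj xa z2 := G.convex z2 xb xa x₀ hle hxa_le hzb hz2
    refine ⟨Sum.inr z2, Sum.inl xa, Or.inr ⟨xa, z2, rfl, rfl, hadja⟩, ?_, ?_, ?_⟩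
    · rw [← hy2]; exact hgv (L - 1) (by omega)
    · rw [← ha2]; exact hgv 2 (by omega)
    · intro hEdge
      rw [← hedges, ← hy2] at hEdge
      have hcase := StmtAux.edge_endpoints hc' (show (0:ℕ) < L - 1 by omega)
        (show L - 1 < L by omega) hEdge
      rw [show L - 1 - 1 = L - 2 by omega, show L - 1 + 1 = L by omega, hLL, hb] at hcase
      rcases hcase with h | h
      · exact hab (Sum.inl.inj h)
      · exact hxa_ne (Sum.inl.inj h)
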